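/- Let T be a tree, ω a nonnegative weight function, and D a distribution on T that is not ω-solvable with |D| = γ_ω(T) − 1. Then for every non-leaf vertex x of T there exists a neighbor y of x such that C_x(y) ≥ 0, where C_x denotes the induced generalized distribution (obtained from D − ω by iterated leaf-contraction) on the star T_x consisting of x and all its neighbors. -/

import Mathlib

open SimpleGraph Finset

variable {V : Type*} [DecidableEq V]

/-- A single pebbling move: remove two pebbles from `u` and add one on an adjacent `v`. -/
def PebStep (G : SimpleGraph V) (D D' : V → ℕ) : Prop :=
  ∃ u v, G.Adj u v ∧ 2 ≤ D u ∧
    D' = fun x => if x = u then D u - 2 else if x = v then D v + 1 else D x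

/-- Reachability by a sequence of pebbling moves. -/
def PebReach (G : SimpleGraph V) : (V → ℕ) → (V → ℕ) → Prop :=
  Relation.ReflTransGen (PebStep G)

/-- `D` is `ω`-solvable: some sequence of pebbling moves reaches `D'` with `D' ≥ ω`. -/
def Solvable (G : SimpleGraph V) (ω D : V → ℕ) : Prop :=
  ∃ D', PebReach G D D' ∧ ∀ v, ω v ≤ D' v

/-- The `ω`-cover pebbling number: least `N` such that every distribution of
`N` pebbles is `ω`-solvable. -/
noncomputable def coverNum [Fintype V] (G : SimpleGraph V) (ω : V → ℕ) : ℕ :=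
  sInf {N | ∀ D : V → ℕ, (∑ v, D v) = N → Solvable G ω D}

/-- The `t`-pebbling number of a vertex `v`: least `N` such that from every
distribution of `N` pebbles one can move `t` pebbles onto `v`. -/
noncomputable def ftNum [Fintype V] (G : SimpleGraph V) (v : V) (t : ℕ) : ℕ :=
  sInf {N | ∀ D : V → ℕ, (∑ x, D x) = N → ∃ D', PebReach G D D' ∧ t ≤ D' v}
/-- A valid sequence of pebbling moves: `ValidSeq G D S D'` means executing the
moves of `S` in order (each move `(u,v)` removes two pebbles from `u`, which must
hold at least two, and adds one on the adjacent vertex `v`) transforms `D` into `D'`. -/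
inductive ValidSeq (G : SimpleGraph V) : (V → ℕ) → List (V × V) → (V → ℕ) → Prop
  | nil (D : V → ℕ) : ValidSeq G D [] D
  | cons (D : V → ℕ) (u v : V) (huv : G.Adj u v) (h2 : 2 ≤ D u) {S : List (V × V)}
      {D' : V → ℕ}
      (h : ValidSeq G (fun x => if x = u then D u - 2 else if x = v then D v + 1 else D x)
        S D') :
      ValidSeq G D ((u, v) :: S) D'

/-- A generalized pebbling move among vertices of `A`, on integer-valued distributions. -/
def ZStepOn (G : SimpleGraph V) (A : Set V) (C C' : V → ℤ) : Prop :=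
  ∃ u v, u ∈ A ∧ v ∈ A ∧ G.Adj u v ∧ 2 ≤ C u ∧
    C' = fun x => if x = u then C u - 2 else if x = v then C v + 1 else C x

/-- A generalized distribution is `0`-solvable within `A` if pebbling moves inside `A`
reach a distribution nonnegative on `A`. -/
def ZSolvableOn (G : SimpleGraph V) (A : Set V) (C : V → ℤ) : Prop :=
  ∃ C', Relation.ReflTransGen (ZStepOn G A) C C' ∧ ∀ x ∈ A, 0 ≤ C' x

/-- Iterated leaf contraction: `Contract G s C s' C'` means the generalized
distribution `C` on the vertex set `s` can be contracted to `C'` on `s'` by repeatedly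
deleting a leaf `x` (a vertex with a unique neighbor `y` in the current set), replacing
`C y` by `C y + ⌊C x / 2⌋` if `C x ≥ 0` and by `C y + 2 C x` if `C x < 0`. -/
inductive Contract (G : SimpleGraph V) : Finset V → (V → ℤ) → Finset V → (V → ℤ) → Prop
  | refl (s : Finset V) (C : V → ℤ) : Contract G s C s C
  | step {s : Finset V} {C : V → ℤ} (x y : V) (hx : x ∈ s) (hy : y ∈ s)
      (hadj : G.Adj x y) (hleaf : ∀ z ∈ s, G.Adj x z → z = y)
      {s' : Finset V} {C' : V → ℤ}
      (h : Contract G (s.erase x)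
        (fun w => if w = y then C y + (if 0 ≤ C x then C x / 2 else 2 * C x) else C w)
        s' C') :
      Contract G s C s' C'


/-! ### Auxiliary machinery -/

/-- contribution function for flows -/
def phiZ (z : ℤ) : ℤ := if 0 ≤ z then z else 2 * z

/-- contraction gain function -/
def ggZ (z : ℤ) : ℤ := if 0 ≤ z then z / 2 else 2 * z

/-- Flow-feasibility of a generalized distribution on a finite vertex set. -/
def Feas (G : SimpleGraph V) (s : Finset V) (C : V → ℤ) : Prop :=
  ∃ t : V → V → ℤ, (∀ u v, t u v = - t v u) ∧
    (∀ u v, ¬ (u ∈ s ∧ v ∈ s ∧ G.Adj u v) → t u v = 0) ∧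
    ∀ v ∈ s, 0 ≤ C v + ∑ u ∈ s, phiZ (t u v)

lemma phiZ_zero : phiZ 0 = 0 := by simp [phiZ]

lemma phiZ_add_one (z : ℤ) : phiZ z + 1 ≤ phiZ (z + 1) := by
  unfold phiZ; split <;> split <;> omega

lemma phiZ_sub_one (z : ℤ) : phiZ z - 2 ≤ phiZ (z - 1) := by
  unfold phiZ; split <;> split <;> omega

lemma contract_subset {G : SimpleGraph V} {s s' : Finset V} {C C' : V → ℤ}
    (h : Contract G s C s' C') : s' ⊆ s := by
  induction h with
  | refl => exact Finset.Subset.refl _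
  | step x y hx hy hadj hleaf h ih => exact ih.trans (Finset.erase_subset _ _)

lemma contract_bump {G : SimpleGraph V} {s s' : Finset V} {C C' : V → ℤ}
    (h : Contract G s C s' C') (g : V → ℤ) : (∀ v, v ∉ s' → g v = 0) →
    Contract G s (fun v => C v + g v) s' (fun v => C' v + g v) := by
  induction h with
  | refl s C => exact fun _ => Contract.refl _ _
  | @step s C x y hx hy hadj hleaf s' C' h ih =>
    intro hg
    have hxs' : x ∉ s' := fun hm => (Finset.notMem_erase x s) (contract_subset h hm)
    have hgx : g x = 0 := hg x hxs'
    refine Contract.step x y hx hy hadj hleaf ?_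
    have hfun : (fun w => if w = y then (fun v => C v + g v) y +
          (if 0 ≤ (fun v => C v + g v) x then (fun v => C v + g v) x / 2
            else 2 * (fun v => C v + g v) x) else (fun v => C v + g v) w)
        = (fun w => (if w = y then C y + (if 0 ≤ C x then C x / 2 else 2 * C x) else C w) + g w) := by
      funext w
      by_cases hw : w = y
      · simp only [hw, ite_true]; simp only [hgx, add_zero]; ring
      · simp only [hw, ite_false]
    rw [hfun]
    exact ih hg

lemma contract_fixed {G : SimpleGraph V} {s s' : Finset V} {C C' : V → ℤ}
    (h : Contract G s C s' C') : ∀ v ∈ s', (∀ w, G.Adj v w → w ∈ s') → C' v = C v := by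
  induction h with
  | refl s C => exact fun v _ _ => rfl
  | @step s C x y hx hy hadj hleaf s' C' h ih =>
    intro v hv hnb
    have hxs' : x ∉ s' := fun hm => (Finset.notMem_erase x s) (contract_subset h hm)
    have hvy : v ≠ y := by rintro rfl; exact hxs' (hnb x hadj.symm)
    rw [ih v hv hnb]
    simp [hvy]

lemma feas_erase {G : SimpleGraph V} {s : Finset V} {C : V → ℤ} {x y : V}
    (hx : x ∈ s) (hy : y ∈ s) (hadj : G.Adj x y)
    (hleaf : ∀ z ∈ s, G.Adj x z → z = y) :
    Feas G s C ↔ Feas G (s.erase x)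
      (fun w => if w = y then C y + (if 0 ≤ C x then C x / 2 else 2 * C x) else C w) := by
  have hxy : x ≠ y := hadj.ne
  constructor
  · rintro ⟨t, hanti, hsupp, hcon⟩
    have hsum_x : ∑ u ∈ s, phiZ (t u x) = phiZ (t y x) := by
      rw [← Finset.add_sum_erase s _ hy, add_comm]
      have : ∑ u ∈ s.erase y, phiZ (t u x) = 0 := by
        apply Finset.sum_eq_zero
        intro u hu
        have hzero : t u x = 0 := by
          apply hsupp
          rintro ⟨hus, -, hux⟩
          exact Finset.ne_of_mem_erase hu (hleaf u hus hux.symm)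
        rw [hzero, phiZ_zero]
      rw [this, zero_add]
    have hconx := hcon x hx
    rw [hsum_x, hanti y x] at hconx
    have hA : phiZ (t x y) ≤ (if 0 ≤ C x then C x / 2 else 2 * C x) := by
      revert hconx; unfold phiZ; split_ifs <;> intro h <;> omega
    refine ⟨fun p q => if p = x ∨ q = x then 0 else t p q, ?_, ?_, ?_⟩
    · intro u v
      dsimp only
      by_cases h : u = x ∨ v = x
      · rw [if_pos h, if_pos (Or.symm h), neg_zero]
      · rw [if_neg h, if_neg (fun hc => h (Or.symm hc))]; exact hanti u v
    · intro u v hm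
      dsimp only
      by_cases h : u = x ∨ v = x
      · rw [if_pos h]
      · rw [if_neg h]
        apply hsupp
        rintro ⟨hus, hvs, huv⟩
        push_neg at h
        exact hm ⟨Finset.mem_erase.mpr ⟨h.1, hus⟩, Finset.mem_erase.mpr ⟨h.2, hvs⟩, huv⟩
    · intro v hv
      dsimp only
      have hvs : v ∈ s := Finset.mem_of_mem_erase hv
      have hvx : v ≠ x := Finset.ne_of_mem_erase hv
      have hterm : ∀ u ∈ s.erase x,
          phiZ (if u = x ∨ v = x then 0 else t u v) = phiZ (t u v) := by
        intro u hu
        rw [if_neg]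
        push_neg
        exact ⟨Finset.ne_of_mem_erase hu, hvx⟩
      rw [Finset.sum_congr rfl hterm]
      have hsplit : ∑ u ∈ s, phiZ (t u v) = phiZ (t x v) + ∑ u ∈ s.erase x, phiZ (t u v) :=
        (Finset.add_sum_erase s _ hx).symm
      by_cases hvy : v = y
      · subst hvy
        rw [if_pos rfl]
        have := hcon v hvs
        rw [hsplit] at this
        linarith [hA]
      · rw [if_neg hvy]
        have htxv : t x v = 0 := by
          apply hsupp
          rintro ⟨-, -, hxv⟩
          exact hvy (hleaf v hvs hxv)
        have := hcon v hvs
        rw [hsplit, htxv, phiZ_zero] at this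
        linarith
  · rintro ⟨t, hanti, hsupp, hcon⟩
    set A := if 0 ≤ C x then C x / 2 else C x with hAdef
    have hAx : phiZ A = (if 0 ≤ C x then C x / 2 else 2 * C x) := by
      unfold phiZ; rw [hAdef]; split_ifs <;> omega
    have htx0 : ∀ u, t u x = 0 := by
      intro u
      apply hsupp
      rintro ⟨-, hxe, -⟩
      exact (Finset.notMem_erase x s) hxe
    have htx0' : ∀ u, t x u = 0 := by
      intro u
      rw [hanti, htx0, neg_zero]
    refine ⟨fun p q => if p = x ∧ q = y then A else if p = y ∧ q = x then -A else t p q,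
      ?_, ?_, ?_⟩
    · intro u v
      dsimp only
      by_cases h1 : u = x ∧ v = y
      · obtain ⟨rfl, rfl⟩ := h1
        rw [if_pos ⟨rfl, rfl⟩, if_neg (fun hc => hxy hc.1.symm), if_pos ⟨rfl, rfl⟩, neg_neg]
      · rw [if_neg h1]
        by_cases h2 : u = y ∧ v = x
        · obtain ⟨rfl, rfl⟩ := h2
          rw [if_pos ⟨rfl, rfl⟩, if_pos ⟨rfl, rfl⟩]
        · rw [if_neg h2, if_neg (fun hc : v = x ∧ u = y => h2 ⟨hc.2, hc.1⟩),
            if_neg (fun hc : v = y ∧ u = x => h1 ⟨hc.2, hc.1⟩)]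
          exact hanti u v
    · intro u v hm
      dsimp only
      by_cases h1 : u = x ∧ v = y
      · obtain ⟨rfl, rfl⟩ := h1
        exact absurd ⟨hx, hy, hadj⟩ hm
      · rw [if_neg h1]
        by_cases h2 : u = y ∧ v = x
        · obtain ⟨rfl, rfl⟩ := h2
          exact absurd ⟨hy, hx, hadj.symm⟩ hm
        · rw [if_neg h2]
          apply hsupp
          rintro ⟨ha, hb, hc⟩
          exact hm ⟨Finset.mem_of_mem_erase ha, Finset.mem_of_mem_erase hb, hc⟩
    · intro v hvs
      dsimp only
      by_cases hvx : v = x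
      · subst hvx
        have hsum : ∑ u ∈ s, phiZ (if u = v ∧ v = y then A
            else if u = y ∧ v = v then -A else t u v) = phiZ (-A) := by
          rw [← Finset.add_sum_erase s _ hy, add_comm]
          have h1 : (if (y:V) = v ∧ v = y then A else if y = y ∧ v = v then -A else t y v)
              = -A := by
            rw [if_neg (fun hc => hxy hc.2), if_pos ⟨rfl, rfl⟩]
          rw [h1]
          have h2 : ∑ u ∈ s.erase y, phiZ (if u = v ∧ v = y then A
              else if u = y ∧ v = v then -A else t u v) = 0 := by
            apply Finset.sum_eq_zero
            intro u hu
            rw [if_neg (fun hc => hxy hc.2), if_neg (fun hc =>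
              Finset.ne_of_mem_erase hu hc.1), htx0 u, phiZ_zero]
          rw [h2, zero_add]
        rw [hsum]
        unfold phiZ
        rw [hAdef]
        split_ifs <;> omega
      · have hv' : v ∈ s.erase x := Finset.mem_erase.mpr ⟨hvx, hvs⟩
        have hcv := hcon v hv'
        have hsplit : ∑ u ∈ s, phiZ (if u = x ∧ v = y then A
            else if u = y ∧ v = x then -A else t u v)
            = phiZ (if (x:V) = x ∧ v = y then A else if x = y ∧ v = x then -A else t x v)
              + ∑ u ∈ s.erase x, phiZ (t u v) := by
          rw [← Finset.add_sum_erase s _ hx]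
          congr 1
          apply Finset.sum_congr rfl
          intro u hu
          rw [if_neg (fun hc => Finset.ne_of_mem_erase hu hc.1),
            if_neg (fun hc => hvx hc.2)]
        rw [hsplit]
        by_cases hvy : v = y
        · subst hvy
          rw [if_pos ⟨rfl, rfl⟩, hAx]
          simp only [eq_self_iff_true, if_true] at hcv
          linarith
        · rw [if_neg (fun hc : (x:V) = x ∧ v = y => hvy hc.2),
            if_neg (fun hc : (x:V) = y ∧ v = x => hxy hc.1), htx0' v, phiZ_zero]
          simp only [if_neg hvy] at hcv
          linarith

lemma contract_feas {G : SimpleGraph V} {s s' : Finset V} {C C' : V → ℤ}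
    (h : Contract G s C s' C') : Feas G s C ↔ Feas G s' C' := by
  induction h with
  | refl => exact Iff.rfl
  | step x y hx hy hadj hleaf h ih =>
      exact (feas_erase hx hy hadj hleaf).trans ih

lemma reach_flow [Fintype V] {G : SimpleGraph V} {D F : V → ℕ}
    (h : PebReach G D F) :
    ∃ t : V → V → ℤ, (∀ u v, t u v = - t v u) ∧
      (∀ u v, ¬ G.Adj u v → t u v = 0) ∧
      ∀ v, (F v : ℤ) ≤ D v + ∑ u, phiZ (t u v) := by
  induction h using Relation.ReflTransGen.head_induction_on with
  | refl =>
    exact ⟨fun _ _ => 0, fun u v => by simp, fun u v _ => rfl,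
      fun v => by simp [phiZ_zero]⟩
  | @head a c hstep hrest ih =>
    obtain ⟨u₀, v₀, hadj, h2, hc⟩ := hstep
    subst hc
    obtain ⟨t₁, hanti, hsupp, hcon⟩ := ih
    have hne : u₀ ≠ v₀ := hadj.ne
    refine ⟨fun p q => t₁ p q + (if p = u₀ ∧ q = v₀ then 1 else 0)
      - (if p = v₀ ∧ q = u₀ then 1 else 0), ?_, ?_, ?_⟩
    · intro u v
      dsimp only
      rw [hanti u v]
      split_ifs <;> first | omega | tauto
    · intro u v hn
      dsimp only
      rw [if_neg (fun hc' : u = u₀ ∧ v = v₀ => hn (hc'.1 ▸ hc'.2 ▸ hadj)),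
        if_neg (fun hc' : u = v₀ ∧ v = u₀ => hn (hc'.1 ▸ hc'.2 ▸ hadj.symm)),
        hsupp u v hn]
      ring
    · intro v
      dsimp only
      by_cases hv1 : v = v₀
      · subst hv1
        have hpt : ∀ u : V, phiZ (t₁ u v) + (if u = u₀ then (1:ℤ) else 0)
            ≤ phiZ (t₁ u v + (if u = u₀ ∧ v = v then 1 else 0)
              - (if u = v ∧ v = u₀ then 1 else 0)) := by
          intro u
          by_cases hu : u = u₀
          · rw [if_pos hu, if_pos ⟨hu, rfl⟩, if_neg (fun hc' : u = v ∧ v = u₀ => hne hc'.2.symm),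
              sub_zero]
            exact phiZ_add_one _
          · rw [if_neg hu, if_neg (fun hc' : u = u₀ ∧ v = v => hu hc'.1),
              if_neg (fun hc' : u = v ∧ v = u₀ => hne hc'.2.symm), add_zero, sub_zero, add_zero]
        have hsum := Finset.sum_le_sum (fun u (_ : u ∈ Finset.univ) => hpt u)
        rw [Finset.sum_add_distrib, Finset.sum_ite_eq' Finset.univ u₀ (fun _ => (1:ℤ))] at hsum
        simp only [Finset.mem_univ, if_true, eq_self_iff_true, and_true, true_and] at hsum ⊢
        have hcv := hcon v
        have hcval : ((if v = u₀ then a u₀ - 2 else if v = v then a v + 1 else a v : ℕ) : ℤ)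
            = (a v : ℤ) + 1 := by
          rw [if_neg (fun hc => hne hc.symm), if_pos rfl]
          push_cast; ring
        rw [hcval] at hcv
        linarith
      · by_cases hv2 : v = u₀
        · subst hv2
          have hpt : ∀ u : V, phiZ (t₁ u v) - (if u = v₀ then (2:ℤ) else 0)
              ≤ phiZ (t₁ u v + (if u = v ∧ v = v₀ then 1 else 0)
                - (if u = v₀ ∧ v = v then 1 else 0)) := by
            intro u
            by_cases hu : u = v₀
            · rw [if_pos hu, if_neg (fun hc' : u = v ∧ v = v₀ => hv1 hc'.2),
                if_pos ⟨hu, rfl⟩, add_zero]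
              exact phiZ_sub_one _
            · rw [if_neg hu, if_neg (fun hc' : u = v ∧ v = v₀ => hv1 hc'.2),
                if_neg (fun hc' : u = v₀ ∧ v = v => hu hc'.1), add_zero, sub_zero, sub_zero]
          have hsum := Finset.sum_le_sum (fun u (_ : u ∈ Finset.univ) => hpt u)
          rw [Finset.sum_sub_distrib, Finset.sum_ite_eq' Finset.univ v₀ (fun _ => (2:ℤ))] at hsum
          simp only [Finset.mem_univ, if_true, eq_self_iff_true, and_true, true_and] at hsum ⊢
          have hcv := hcon v
          have hcval : ((if v = v then a v - 2 else if v = v₀ then a v₀ + 1 else a v : ℕ) : ℤ)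
              = (a v : ℤ) - 2 := by
            rw [if_pos rfl]
            have h2' : (2:ℕ) ≤ a v := h2
            push_cast [Nat.cast_sub h2']
            ring
          rw [hcval] at hcv
          linarith
        · have hpt : ∀ u : V, (t₁ u v + (if u = u₀ ∧ v = v₀ then (1:ℤ) else 0)
              - (if u = v₀ ∧ v = u₀ then 1 else 0)) = t₁ u v := by
            intro u
            rw [if_neg (fun hc' : u = u₀ ∧ v = v₀ => hv1 hc'.2),
              if_neg (fun hc' : u = v₀ ∧ v = u₀ => hv2 hc'.2)]
            ring
          have hsum : ∑ u, phiZ (t₁ u v + (if u = u₀ ∧ v = v₀ then (1:ℤ) else 0)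
              - (if u = v₀ ∧ v = u₀ then 1 else 0)) = ∑ u, phiZ (t₁ u v) :=
            Finset.sum_congr rfl (fun u _ => by rw [hpt u])
          have hcv := hcon v
          have hcval : ((if v = u₀ then a u₀ - 2 else if v = v₀ then a v₀ + 1 else a v : ℕ) : ℤ)
              = (a v : ℤ) := by
            rw [if_neg hv2, if_neg hv1]
          rw [hcval] at hcv
          rw [hsum]
          linarith

lemma solvable_feas [Fintype V] {G : SimpleGraph V} {ω D : V → ℕ}
    (h : Solvable G ω D) :
    Feas G Finset.univ (fun v => (D v : ℤ) - (ω v : ℤ)) := by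
  obtain ⟨F, hr, hge⟩ := h
  obtain ⟨t, hanti, hsupp, hcon⟩ := reach_flow hr
  refine ⟨t, hanti, fun u v hm => hsupp u v (fun hadj =>
    hm ⟨Finset.mem_univ u, Finset.mem_univ v, hadj⟩), ?_⟩
  intro v _
  dsimp only
  have h1 := hcon v
  have h2 : (ω v : ℤ) ≤ F v := by exact_mod_cast hge v
  linarith

lemma moveMany {G : SimpleGraph V} {u y : V} (hadj : G.Adj u y) (k : ℕ) :
    ∀ D : V → ℕ, 2 * k ≤ D u →
    PebReach G D (fun v => if v = u then D u - 2 * k else if v = y then D y + k else D v) := by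
  have hne : y ≠ u := hadj.ne'
  induction k with
  | zero =>
    intro D _
    have heq : (fun v => if v = u then D u - 2 * 0 else if v = y then D y + 0 else D v) = D := by
      funext v
      by_cases h1 : v = u
      · simp [h1]
      · by_cases h2 : v = y <;> simp [h1, h2, hne]
    rw [heq]
    exact Relation.ReflTransGen.refl
  | succ k ih =>
    intro D hk
    set D1 : V → ℕ := fun x => if x = u then D u - 2 else if x = y then D y + 1 else D x with hD1
    have hstep : PebStep G D D1 := ⟨u, y, hadj, by omega, rfl⟩
    have hk1 : 2 * k ≤ D1 u := by simp [hD1]; omega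
    have := ih D1 hk1
    have hfun : (fun v => if v = u then D1 u - 2 * k else if v = y then D1 y + k else D1 v)
        = (fun v => if v = u then D u - 2 * (k+1) else if v = y then D y + (k+1) else D v) := by
      funext v
      by_cases h1 : v = u
      · simp [h1, hD1, hne]; omega
      · by_cases h2 : v = y <;> simp [h1, h2, hD1, hne] <;> omega
    rw [hfun] at this
    exact Relation.ReflTransGen.head hstep this

lemma reach_mono {G : SimpleGraph V} {D₁ F₁ : V → ℕ} (h : PebReach G D₁ F₁) :
    ∀ D₂ : V → ℕ, (∀ v, D₁ v ≤ D₂ v) → ∃ F₂, PebReach G D₂ F₂ ∧ ∀ v, F₁ v ≤ F₂ v := by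
  induction h using Relation.ReflTransGen.head_induction_on with
  | refl => exact fun D₂ hle => ⟨D₂, Relation.ReflTransGen.refl, hle⟩
  | head hstep _ ih =>
    intro D₂ hle
    obtain ⟨u, v, hadj, h2, rfl⟩ := hstep
    obtain ⟨F₂, hr, hF⟩ := ih (fun x => if x = u then D₂ u - 2 else if x = v then D₂ v + 1 else D₂ x)
      (by
        intro x
        dsimp only
        by_cases h1 : x = u
        · subst h1; rw [if_pos rfl, if_pos rfl]; have := hle x; omega
        · by_cases h2' : x = v
          · subst h2'; rw [if_neg h1, if_pos rfl, if_neg h1, if_pos rfl]; have := hle x; omega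
          · rw [if_neg h1, if_neg h2', if_neg h1, if_neg h2']; exact hle x)
    exact ⟨F₂, Relation.ReflTransGen.head ⟨u, v, hadj, by have := hle u; omega, rfl⟩ hr, hF⟩

lemma solvable_mono {G : SimpleGraph V} {ω D₁ D₂ : V → ℕ} (h : Solvable G ω D₁)
    (hle : ∀ v, D₁ v ≤ D₂ v) : Solvable G ω D₂ := by
  obtain ⟨F₁, hr, hg⟩ := h
  obtain ⟨F₂, hr₂, hle₂⟩ := reach_mono hr D₂ hle
  exact ⟨F₂, hr₂, fun v => (hg v).trans (hle₂ v)⟩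

/-- A leaf-elimination sequence for the vertex set `s`, ending at `{r}`. -/
inductive ElimSeq (G : SimpleGraph V) : Finset V → V → Prop
  | single (r : V) : ElimSeq G {r} r
  | step {s : Finset V} {r : V} (u y : V) (hu : u ∈ s) (hy : y ∈ s)
      (hadj : G.Adj u y) (hleaf : ∀ z ∈ s, G.Adj u z → z = y)
      (h : ElimSeq G (s.erase u) r) : ElimSeq G s r

lemma feas_congr {G : SimpleGraph V} {s : Finset V} {C C₂ : V → ℤ}
    (h : Feas G s C) (heq : ∀ v ∈ s, C v = C₂ v) : Feas G s C₂ := by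
  obtain ⟨t, h1, h2, h3⟩ := h
  exact ⟨t, h1, h2, fun v hv => (heq v hv) ▸ (h3 v hv)⟩

lemma elim_solv {G : SimpleGraph V} {s : Finset V} {r : V} (he : ElimSeq G s r) :
    ∀ D ω : V → ℕ, Feas G s (fun v => (D v : ℤ) - (ω v : ℤ)) →
    ∃ F, PebReach G D F ∧ (∀ v ∈ s, ω v ≤ F v) ∧ ∀ v ∉ s, F v = D v := by
  induction he with
  | single r =>
    intro D ω hf
    obtain ⟨t, hanti, hsupp, hcon⟩ := hf
    have htrr : t r r = 0 := by
      have := hanti r r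
      omega
    have := hcon r (Finset.mem_singleton_self r)
    rw [Finset.sum_singleton, htrr, phiZ_zero] at this
    dsimp only at this
    refine ⟨D, Relation.ReflTransGen.refl, ?_, fun v _ => rfl⟩
    intro v hv
    rw [Finset.mem_singleton] at hv
    subst hv
    omega
  | @step s r u y hu hy hadj hleaf hrec ih =>
    intro D ω hf
    have hf' := (feas_erase hu hy hadj hleaf).mp hf
    have huy : u ≠ y := hadj.ne
    by_cases hc : ω u ≤ D u
    · -- u has a surplus; move ⌊(D u - ω u)/2⌋ pebbles to y
      set g : ℕ := (D u - ω u) / 2 with hg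
      set D' : V → ℕ := fun v => if v = u then D u - 2 * g else if v = y then D y + g else D v
        with hD'
      have h2g : 2 * g ≤ D u - ω u := by
        rw [hg, mul_comm]
        exact Nat.div_mul_le_self _ 2
      have hreach1 : PebReach G D D' := moveMany hadj g D (by omega)
      have hcast : ((g : ℤ)) = ((D u : ℤ) - (ω u : ℤ)) / 2 := by omega
      have hf'' : Feas G (s.erase u) (fun v => (D' v : ℤ) - (ω v : ℤ)) := by
        apply feas_congr hf'
        intro v hv
        have hvu : v ≠ u := Finset.ne_of_mem_erase hv
        by_cases hvy : v = y
        · subst hvy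
          have h0 : (0:ℤ) ≤ (D u : ℤ) - (ω u : ℤ) := by
            have : (ω u : ℤ) ≤ D u := by exact_mod_cast hc
            omega
          rw [if_pos rfl, if_pos h0, hD']
          simp only [if_neg (fun hh : v = u => hvu hh), eq_self_iff_true, if_true]
          push_cast
          omega
        · rw [if_neg hvy, hD']
          simp only [if_neg hvu, if_neg hvy]
      obtain ⟨F, hreach2, hge, hfix⟩ := ih D' ω hf''
      refine ⟨F, hreach1.trans hreach2, ?_, ?_⟩
      · intro v hv
        by_cases hvu : v = u
        · subst hvu
          have hFu : F v = D' v := hfix v (Finset.notMem_erase v s)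
          rw [hFu, hD']
          simp only [eq_self_iff_true, if_true]
          omega
        · exact hge v (Finset.mem_erase.mpr ⟨hvu, hv⟩)
      · intro v hv
        have h1 : F v = D' v := hfix v (fun hm => hv (Finset.mem_of_mem_erase hm))
        have hvu : v ≠ u := fun hh => hv (hh ▸ hu)
        have hvy : v ≠ y := fun hh => hv (hh ▸ hy)
        rw [h1, hD']
        simp only [if_neg hvu, if_neg hvy]
    · -- u has a deficit d; first solve with an increased target at y
      push_neg at hc
      set d : ℕ := ω u - D u with hd
      have hd1 : 1 ≤ d := by omega
      set ω' : V → ℕ := fun v => if v = y then ω y + 2 * d else ω v with hω'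
      have hf'' : Feas G (s.erase u) (fun v => (D v : ℤ) - (ω' v : ℤ)) := by
        apply feas_congr hf'
        intro v hv
        have hvu : v ≠ u := Finset.ne_of_mem_erase hv
        by_cases hvy : v = y
        · subst hvy
          have h0 : ¬ (0:ℤ) ≤ (D u : ℤ) - (ω u : ℤ) := by
            have : (D u : ℤ) < ω u := by exact_mod_cast hc
            omega
          rw [if_pos rfl, if_neg h0, hω']
          simp only [eq_self_iff_true, if_true]
          push_cast
          omega
        · rw [if_neg hvy, hω']
          simp only [if_neg hvy]
      obtain ⟨F', hreach1, hge, hfix⟩ := ih D ω' hf''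
      have hF'y : ω y + 2 * d ≤ F' y := by
        have := hge y (Finset.mem_erase.mpr ⟨fun hh => huy hh.symm, hy⟩)
        rw [hω'] at this
        simpa using this
      set F : V → ℕ := fun v => if v = y then F' y - 2 * d else if v = u then F' u + d else F' v
        with hF
      have hreach2 : PebReach G F' F := moveMany hadj.symm d F' (by omega)
      have hF'u : F' u = D u := hfix u (Finset.notMem_erase u s)
      refine ⟨F, hreach1.trans hreach2, ?_, ?_⟩
      · intro v hv
        by_cases hvy : v = y
        · subst hvy
          rw [hF]
          simp only [eq_self_iff_true, if_true]
          omega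
        · by_cases hvu : v = u
          · subst hvu
            rw [hF]
            simp only [if_neg (fun hh : v = y => hvy hh), eq_self_iff_true, if_true]
            omega
          · have := hge v (Finset.mem_erase.mpr ⟨hvu, hv⟩)
            rw [hω'] at this
            simp only [if_neg hvy] at this
            rw [hF]
            simp only [if_neg hvy, if_neg hvu]
            exact this
      · intro v hv
        have hvu : v ≠ u := fun hh => hv (hh ▸ hu)
        have hvy : v ≠ y := fun hh => hv (hh ▸ hy)
        have h1 : F' v = D v := hfix v (fun hm => hv (Finset.mem_of_mem_erase hm))
        rw [hF]
        simp only [if_neg hvy, if_neg hvu]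
        exact h1

lemma path_length_eq_dist {G : SimpleGraph V} (hG : G.IsAcyclic) {v w : V}
    (Q : G.Walk v w) (hQ : Q.IsPath) : Q.length = G.dist v w := by
  have hd : G.dist v w ≤ Q.length := SimpleGraph.dist_le Q
  obtain ⟨W, hW⟩ := Q.reachable.exists_walk_length_eq_dist
  have hpeq : (⟨Q, hQ⟩ : G.Path v w) = ⟨W.bypass, W.bypass_isPath⟩ :=
    hG.path_unique _ _
  have hQW : Q = W.bypass := congrArg Subtype.val hpeq
  have : Q.length ≤ W.length := hQW ▸ W.length_bypass_le
  omega

lemma tree_parent {T : SimpleGraph V} (hT : T.IsTree) (r u : V) (hu : u ≠ r) :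
    ∃ p, T.Adj u p ∧ T.dist r p + 1 = T.dist r u ∧
      ∀ w, T.Adj u w → w ≠ p → T.dist r w = T.dist r u + 1 := by
  have hac := hT.IsAcyclic
  obtain ⟨P, hP, hPuniq⟩ := hT.existsUnique_path r u
  have hlen : P.length = T.dist r u := path_length_eq_dist hac P hP
  have hPrev : P.reverse.IsPath := (SimpleGraph.Walk.isPath_reverse_iff P).mpr hP
  cases hPr : P.reverse with
  | nil => exact absurd rfl hu
  | @cons _ p _ hadj q =>
    have hq : (SimpleGraph.Walk.cons hadj q).IsPath := hPr ▸ hPrev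
    rw [SimpleGraph.Walk.cons_isPath_iff] at hq
    have hPconcat : P = q.reverse.concat hadj.symm := by
      have h1 := congrArg SimpleGraph.Walk.reverse hPr
      rw [SimpleGraph.Walk.reverse_reverse] at h1
      rw [h1, SimpleGraph.Walk.reverse_cons, SimpleGraph.Walk.concat_eq_append]
    have hqrev : q.reverse.IsPath := (SimpleGraph.Walk.isPath_reverse_iff q).mpr hq.1
    have hlenq : q.reverse.length = T.dist r p := path_length_eq_dist hac q.reverse hqrev
    have hlenP : P.length = q.reverse.length + 1 := by
      rw [hPconcat, SimpleGraph.Walk.length_concat]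
    refine ⟨p, hadj, by omega, ?_⟩
    intro w hw hwp
    obtain ⟨Pw, hPw, -⟩ := hT.existsUnique_path r w
    have hlw : Pw.length = T.dist r w := path_length_eq_dist hac Pw hPw
    by_cases hmem : u ∈ Pw.support
    · have hA : (Pw.takeUntil u hmem).IsPath := hPw.takeUntil hmem
      have hB : (Pw.dropUntil u hmem).IsPath := hPw.dropUntil hmem
      have hAlen : (Pw.takeUntil u hmem).length = T.dist r u :=
        path_length_eq_dist hac _ hA
      have hBsing : (⟨Pw.dropUntil u hmem, hB⟩ : T.Path u w) = SimpleGraph.Path.singleton hw :=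
        hac.path_unique _ _
      have hBlen : (Pw.dropUntil u hmem).length = 1 := by
        have := congrArg (fun q : T.Path u w => (q : T.Walk u w).length) hBsing
        simpa [SimpleGraph.Path.singleton] using this
      have hsplit := congrArg SimpleGraph.Walk.length (Pw.take_spec hmem)
      rw [SimpleGraph.Walk.length_append] at hsplit
      omega
    · exfalso
      have hQ'rev : (Pw.concat hw.symm).reverse.IsPath := by
        rw [SimpleGraph.Walk.reverse_concat]
        rw [SimpleGraph.Walk.cons_isPath_iff]
        refine ⟨(SimpleGraph.Walk.isPath_reverse_iff Pw).mpr hPw, ?_⟩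
        rw [SimpleGraph.Walk.support_reverse, List.mem_reverse]
        exact hmem
      have hQ' : (Pw.concat hw.symm).IsPath := by
        rw [← SimpleGraph.Walk.reverse_reverse (Pw.concat hw.symm)]
        exact (SimpleGraph.Walk.isPath_reverse_iff _).mpr hQ'rev
      have heq : Pw.concat hw.symm = q.reverse.concat hadj.symm := by
        rw [← hPconcat]
        exact hPuniq _ hQ'
      obtain ⟨hv, -⟩ := SimpleGraph.Walk.concat_inj heq
      exact hwp hv

lemma elim_exists [Fintype V] {T : SimpleGraph V} (hT : T.IsTree) (r : V) :
    ElimSeq T Finset.univ r := by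
  have hconn := hT.isConnected
  suffices h : ∀ n (s : Finset V), s.card = n → r ∈ s →
      (∀ v, v ∉ s → ∀ w ∈ s, T.dist r w ≤ T.dist r v) → ElimSeq T s r by
    exact h _ Finset.univ rfl (Finset.mem_univ r)
      (fun v hv => absurd (Finset.mem_univ v) hv)
  intro n
  induction n with
  | zero =>
    intro s hcard hr _
    rw [Finset.card_eq_zero] at hcard
    subst hcard
    exact absurd hr (Finset.notMem_empty r)
  | succ n ih =>
    intro s hcard hr hinv
    by_cases hn : n = 0
    · subst hn
      rw [Finset.card_eq_one] at hcard
      obtain ⟨a, rfl⟩ := hcard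
      rw [Finset.mem_singleton] at hr
      subst hr
      exact ElimSeq.single r
    · obtain ⟨u, hus, hmax⟩ := Finset.exists_max_image s (fun v => T.dist r v) ⟨r, hr⟩
      have hune : u ≠ r := by
        rintro rfl
        have hall : ∀ w ∈ s, w = u := by
          intro w hw
          have h1 := hmax w hw
          rw [SimpleGraph.dist_self] at h1
          exact (hconn.dist_eq_zero_iff.mp (Nat.le_zero.mp h1)).symm
        have hsub : s ⊆ {u} := fun w hw => Finset.mem_singleton.mpr (hall w hw)
        have := Finset.card_le_card hsub
        rw [Finset.card_singleton, hcard] at this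
        omega
      obtain ⟨p, hadj, hdp, hothers⟩ := tree_parent hT r u hune
      have hps : p ∈ s := by
        by_contra hps
        have := hinv p hps u hus
        omega
      have hleaf : ∀ z ∈ s, T.Adj u z → z = p := by
        intro z hz hadj'
        by_contra hzp
        have h1 := hothers z hadj' hzp
        have h2 := hmax z hz
        omega
      refine ElimSeq.step u p hus hps hadj hleaf (ih (s.erase u) ?_ ?_ ?_)
      · rw [Finset.card_erase_of_mem hus, hcard]; omega
      · exact Finset.mem_erase.mpr ⟨fun h => hune h.symm, hr⟩
      · intro v hv w hw
        by_cases hvu : v = u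
        · subst hvu
          exact hmax w (Finset.mem_of_mem_erase hw)
        · exact hinv v (fun hm => hv (Finset.mem_erase.mpr ⟨hvu, hm⟩)) w
            (Finset.mem_of_mem_erase hw)

lemma feas_of_big {G : SimpleGraph V} {s : Finset V} {r : V} (he : ElimSeq G s r) :
    ∀ C : V → ℤ,
      8 ^ s.card * ((∑ v ∈ s, max (-C v) 0) + 1) ≤ ∑ v ∈ s, max (C v) 0 →
      Feas G s C := by
  induction he with
  | single r =>
    intro C hbig
    rw [Finset.sum_singleton, Finset.sum_singleton, Finset.card_singleton] at hbig
    norm_num at hbig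
    refine ⟨fun _ _ => 0, fun u v => by simp, fun u v _ => rfl, ?_⟩
    intro v hv
    rw [Finset.mem_singleton] at hv
    subst hv
    rw [Finset.sum_singleton, phiZ_zero]
    omega
  | @step s r u y hu hy hadj hleaf hrec ih =>
    intro C hbig
    have huy : u ≠ y := hadj.ne
    have hyu : y ∈ s.erase u := Finset.mem_erase.mpr ⟨fun h => huy h.symm, hy⟩
    have hRpos : (0:ℤ) ≤ ∑ v ∈ (s.erase u).erase y, max (C v) 0 :=
      Finset.sum_nonneg (fun i _ => le_max_right _ _)
    have hRmpos : (0:ℤ) ≤ ∑ v ∈ (s.erase u).erase y, max (-C v) 0 :=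
      Finset.sum_nonneg (fun i _ => le_max_right _ _)
    set R := ∑ v ∈ (s.erase u).erase y, max (C v) 0 with hR
    set Rm := ∑ v ∈ (s.erase u).erase y, max (-C v) 0 with hRm
    rw [← Finset.add_sum_erase s (fun v => max (C v) 0) hu,
        ← Finset.add_sum_erase (s.erase u) (fun v => max (C v) 0) hyu,
        ← Finset.add_sum_erase s (fun v => max (-C v) 0) hu,
        ← Finset.add_sum_erase (s.erase u) (fun v => max (-C v) 0) hyu] at hbig
    have hcard : s.card = (s.erase u).card + 1 := by
      rw [Finset.card_erase_of_mem hu]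
      have : 1 ≤ s.card := Finset.card_pos.mpr ⟨u, hu⟩
      omega
    rw [hcard, pow_succ] at hbig
    rw [feas_erase hu hy hadj hleaf]
    set gga := (if 0 ≤ C u then C u / 2 else 2 * C u) with hgg
    apply ih
    have e1 : ∑ v ∈ s.erase u,
        max (if v = y then C y + gga else C v) 0 = max (C y + gga) 0 + R := by
      rw [← Finset.add_sum_erase _ _ hyu]
      simp only [eq_self_iff_true, if_true]
      congr 1
      apply Finset.sum_congr rfl
      intro v hv
      rw [if_neg (Finset.ne_of_mem_erase hv)]
    have e2 : ∑ v ∈ s.erase u,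
        max (-(if v = y then C y + gga else C v)) 0 = max (-(C y + gga)) 0 + Rm := by
      rw [← Finset.add_sum_erase _ _ hyu]
      simp only [eq_self_iff_true, if_true]
      congr 1
      apply Finset.sum_congr rfl
      intro v hv
      rw [if_neg (Finset.ne_of_mem_erase hv)]
    rw [e1, e2]
    set K := (8:ℤ) ^ (s.erase u).card with hK
    have hK1 : (1:ℤ) ≤ K := one_le_pow₀ (by norm_num)
    have hK0 : (0:ℤ) ≤ K := by linarith
    set M1 := max (-C u) 0 + (max (-C y) 0 + Rm) with hM1
    have hM1pos : 0 ≤ M1 := by positivity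
    set Y := K * (M1 + 1) with hY
    have hY8 : 8 * Y ≤ max (C u) 0 + (max (C y) 0 + R) := by
      calc 8 * Y = K * 8 * (M1 + 1) := by ring
      _ ≤ _ := hbig
    have hYge : M1 + 1 ≤ Y := le_mul_of_one_le_left (by linarith) hK1
    have hmono : max (-(C y + gga)) 0 + Rm + 1 ≤ 2 * (M1 + 1) := by
      rcases le_or_gt 0 (C u) with h0 | h0
      · rw [hgg, if_pos h0]
        omega
      · rw [hgg, if_neg (not_le.mpr h0)]
        omega
    have hstep1 : K * (max (-(C y + gga)) 0 + Rm + 1) ≤ 2 * Y := by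
      calc K * (max (-(C y + gga)) 0 + Rm + 1) ≤ K * (2 * (M1 + 1)) :=
        mul_le_mul_of_nonneg_left hmono hK0
      _ = 2 * Y := by ring
    have hfin : 2 * Y ≤ max (C y + gga) 0 + R := by
      rcases le_or_gt 0 (C u) with h0 | h0
      · rw [hgg, if_pos h0] at *
        omega
      · rw [hgg, if_neg (not_le.mpr h0)] at *
        omega
    linarith [hstep1, hfin]

lemma shrink_dist [Fintype V] (D : V → ℕ) (N : ℕ) (hN : N ≤ ∑ v, D v) :
    ∃ D₂ : V → ℕ, (∀ v, D₂ v ≤ D v) ∧ (∑ v, D₂ v) = N := by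
  obtain ⟨k, hk⟩ : ∃ k, ∑ v, D v = N + k := ⟨∑ v, D v - N, by omega⟩
  clear hN
  induction k generalizing D with
  | zero => exact ⟨D, fun v => le_rfl, by omega⟩
  | succ k ih =>
    have hpos : 0 < ∑ v, D v := by omega
    have hex : ∃ v, D v ≠ 0 := by
      by_contra hc
      push_neg at hc
      simp only [hc, Finset.sum_const_zero] at hpos
      omega
    obtain ⟨v0, hv0⟩ := hex
    have hsplit := Finset.add_sum_erase Finset.univ D (Finset.mem_univ v0)
    set D' : V → ℕ := fun v => if v = v0 then D v0 - 1 else D v with hD'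
    have hsplit' := Finset.add_sum_erase Finset.univ D' (Finset.mem_univ v0)
    have heq : ∑ v ∈ Finset.univ.erase v0, D' v = ∑ v ∈ Finset.univ.erase v0, D v := by
      apply Finset.sum_congr rfl
      intro v hv
      simp [hD', Finset.ne_of_mem_erase hv]
    have hsum : ∑ v, D' v = N + k := by
      have : D' v0 = D v0 - 1 := by simp [hD']
      omega
    obtain ⟨D₂, h1, h2⟩ := ih D' hsum
    refine ⟨D₂, fun v => (h1 v).trans ?_, h2⟩
    by_cases h : v = v0 <;> simp [hD', h]

lemma cover_solv [Fintype V] {T : SimpleGraph V} (hT : T.IsTree) (ω : V → ℕ) :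
    ∀ D : V → ℕ, coverNum T ω ≤ ∑ v, D v → Solvable T ω D := by
  obtain ⟨r⟩ : Nonempty V := hT.isConnected.nonempty
  have helim := elim_exists hT r
  set W := ∑ v, ω v with hW
  set N₀ := 8 ^ (Fintype.card V) * (W + 1) + W with hN₀
  have hmem : N₀ ∈ {N | ∀ D : V → ℕ, (∑ v, D v) = N → Solvable T ω D} := by
    intro D₀ hD₀
    have hbound : 8 ^ (Finset.univ : Finset V).card *
        ((∑ v, max (-((D₀ v : ℤ) - (ω v : ℤ))) 0) + 1)
        ≤ ∑ v, max ((D₀ v : ℤ) - (ω v : ℤ)) 0 := by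
      have hM : ∑ v, max (-((D₀ v : ℤ) - (ω v : ℤ))) 0 ≤ (W:ℤ) := by
        rw [hW]
        push_cast
        apply Finset.sum_le_sum
        intro i _
        have h1 : (0:ℤ) ≤ D₀ i := by positivity
        omega
      have h1 : ∑ v, ((D₀ v : ℤ) - (ω v : ℤ)) ≤ ∑ v, max ((D₀ v : ℤ) - (ω v : ℤ)) 0 :=
        Finset.sum_le_sum (fun i _ => le_max_left _ _)
      have h2 : ∑ v, ((D₀ v:ℤ) - (ω v:ℤ)) = (N₀:ℤ) - (W:ℤ) := by
        rw [Finset.sum_sub_distrib]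
        have e1 : ∑ v, ((D₀ v:ℤ)) = ((∑ v, D₀ v : ℕ) : ℤ) := by push_cast; rfl
        have e2 : ∑ v, ((ω v:ℤ)) = ((W:ℕ):ℤ) := by rw [hW]; push_cast; rfl
        rw [e1, e2, hD₀]
      have hcard : (Finset.univ : Finset V).card = Fintype.card V := Finset.card_univ
      rw [hcard]
      have hNW : (8:ℤ) ^ (Fintype.card V) * ((W:ℤ)+1) = (N₀:ℤ) - W := by
        rw [hN₀]; push_cast; ring
      have hmul : (8:ℤ) ^ (Fintype.card V) * ((∑ v, max (-((D₀ v : ℤ) - (ω v : ℤ))) 0) + 1)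
          ≤ 8 ^ (Fintype.card V) * ((W:ℤ) + 1) :=
        mul_le_mul_of_nonneg_left (by linarith) (by positivity)
      linarith
    obtain ⟨F, hreach, hge, -⟩ := elim_solv helim D₀ ω (feas_of_big helim _ hbound)
    exact ⟨F, hreach, fun v => hge v (Finset.mem_univ v)⟩
  have hcover : coverNum T ω ∈ {N | ∀ D : V → ℕ, (∑ v, D v) = N → Solvable T ω D} :=
    Nat.sInf_mem ⟨N₀, hmem⟩
  intro D hle
  obtain ⟨D₂, hD₂le, hD₂sum⟩ := shrink_dist D (coverNum T ω) hle
  exact solvable_mono (hcover D₂ hD₂sum) hD₂le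

lemma tree_no_triangle {T : SimpleGraph V} (hT : T.IsAcyclic) {a b c : V}
    (hab : T.Adj a b) (hbc : T.Adj b c) (hac : T.Adj a c) : False := by
  have hp2 : (SimpleGraph.Walk.cons hab.symm
      (SimpleGraph.Walk.cons hac SimpleGraph.Walk.nil) : T.Walk b c).IsPath := by
    simp [SimpleGraph.Walk.cons_isPath_iff, hab.ne, hbc.ne, hac.ne, hab.ne', hbc.ne', hac.ne']
  have := hT.path_unique (SimpleGraph.Path.singleton hbc) ⟨_, hp2⟩
  have hlen := congrArg (fun q : T.Path b c => (q : T.Walk b c).length) this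
  simp [SimpleGraph.Path.singleton] at hlen

lemma feas_insert [Fintype V] {T : SimpleGraph V} [DecidableRel T.Adj] (hT : T.IsTree) (x : V) :
    ∀ M : Finset V, M ⊆ T.neighborFinset x → ∀ C : V → ℤ,
      (Feas T (insert x M) C ↔ 0 ≤ C x + ∑ y ∈ M, ggZ (C y)) := by
  intro M
  induction M using Finset.induction_on with
  | empty =>
    intro _ C
    rw [Finset.sum_empty, add_zero]
    constructor
    · rintro ⟨t, hanti, hsupp, hcon⟩
      have h0 : t x x = 0 := by have := hanti x x; omega
      have hc := hcon x (Finset.mem_insert_self x ∅)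
      rw [show (insert x (∅ : Finset V)) = {x} by rfl, Finset.sum_singleton, h0, phiZ_zero]
        at hc
      linarith
    · intro h
      refine ⟨fun _ _ => 0, fun u v => by simp, fun u v _ => rfl, ?_⟩
      intro v hv
      rw [show (insert x (∅ : Finset V)) = {x} by rfl] at hv ⊢
      rw [Finset.mem_singleton] at hv
      subst hv
      rw [Finset.sum_singleton, phiZ_zero]
      linarith
  | @insert y M hyM ih =>
    intro hsub C
    have hyN : y ∈ T.neighborFinset x := hsub (Finset.mem_insert_self y M)
    have hMN : M ⊆ T.neighborFinset x := fun z hz => hsub (Finset.mem_insert_of_mem hz)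
    have hyadj : T.Adj x y := by rwa [SimpleGraph.mem_neighborFinset] at hyN
    have hxy : x ≠ y := fun h => T.loopless.irrefl x (h ▸ hyadj)
    have hyins : y ∈ insert x (insert y M) :=
      Finset.mem_insert_of_mem (Finset.mem_insert_self y M)
    have hxins : x ∈ insert x (insert y M) := Finset.mem_insert_self x _
    have hleaf : ∀ z ∈ insert x (insert y M), T.Adj y z → z = x := by
      intro z hz hadj'
      rcases Finset.mem_insert.mp hz with rfl | hz'
      · rfl
      rcases Finset.mem_insert.mp hz' with rfl | hz''
      · exact (T.loopless.irrefl _ hadj').elim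
      · have hzN := hMN hz''
        rw [SimpleGraph.mem_neighborFinset] at hzN
        exact (tree_no_triangle hT.IsAcyclic hyadj hadj' hzN).elim
    have herase : (insert x (insert y M)).erase y = insert x M := by
      rw [Finset.erase_insert_of_ne hxy, Finset.erase_insert hyM]
    rw [feas_erase hyins hxins hyadj.symm hleaf, herase, ih hMN, Finset.sum_insert hyM]
    have hMz : ∀ z ∈ M, z ≠ x := by
      intro z hz h
      have := hMN hz
      rw [SimpleGraph.mem_neighborFinset] at this
      exact T.loopless.irrefl x (h ▸ this)
    have heq : ∀ z ∈ M, ggZ (if z = x then C x + (if 0 ≤ C y then C y / 2 else 2 * C y)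
        else C z) = ggZ (C z) := by
      intro z hz
      rw [if_neg (hMz z hz)]
    rw [Finset.sum_congr rfl heq]
    have hxv : (if (x:V) = x then C x + (if 0 ≤ C y then C y / 2 else 2 * C y) else C x)
        = C x + ggZ (C y) := by
      rw [if_pos rfl]
      rfl
    rw [hxv]
    constructor <;> intro h <;> linarith

lemma feas_star [Fintype V] {T : SimpleGraph V} [DecidableRel T.Adj] (hT : T.IsTree)
    (x : V) (C : V → ℤ) :
    Feas T (insert x (T.neighborFinset x)) C ↔
      0 ≤ C x + ∑ y ∈ T.neighborFinset x, ggZ (C y) :=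
  feas_insert hT x (T.neighborFinset x) (Finset.Subset.refl _) C

/-- For a distribution of `γ_ω(T) - 1` pebbles that is not `ω`-solvable, every
non-leaf vertex `x` has a neighbor `y` with `C_x(y) ≥ 0`, where `C_x` is the induced
generalized distribution on the star of `x`. -/
theorem exists_nonneg_neighbor_in_star (T : SimpleGraph V) [Fintype V]
    [DecidableRel T.Adj] (hT : T.IsTree) (ω D : V → ℕ)
    (hns : ¬ Solvable T ω D) (hsize : (∑ x, D x) = coverNum T ω - 1) :
    ∀ x : V, 2 ≤ T.degree x →
      ∀ C' : V → ℤ,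
        Contract T Finset.univ (fun w => (D w : ℤ) - (ω w : ℤ))
          (insert x (T.neighborFinset x)) C' →
        ∃ y, T.Adj x y ∧ 0 ≤ C' y := by
  intro x hdeg C' hcontract
  by_contra hcon
  push_neg at hcon
  have helim := elim_exists hT x
  have hFiff : Feas T Finset.univ (fun w => (D w : ℤ) - (ω w : ℤ)) ↔
      Feas T (insert x (T.neighborFinset x)) C' := contract_feas hcontract
  have hToSolv : ∀ E : V → ℕ,
      Feas T Finset.univ (fun w => (E w : ℤ) - (ω w : ℤ)) → Solvable T ω E := by
    intro E hf
    obtain ⟨F, hreach, hge, -⟩ := elim_solv helim E ω hf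
    exact ⟨F, hreach, fun v => hge v (Finset.mem_univ v)⟩
  have hc0 : coverNum T ω ≠ 0 := by
    intro h0
    exact hns (cover_solv hT ω D (by omega))
  have hneg : ∀ y ∈ T.neighborFinset x, C' y ≤ -1 := by
    intro y hy
    rw [SimpleGraph.mem_neighborFinset] at hy
    have := hcon y hy
    omega
  have hggneg : ∀ y ∈ T.neighborFinset x, ggZ (C' y) = 2 * C' y := by
    intro y hy
    have := hneg y hy
    unfold ggZ
    rw [if_neg (by omega)]
  set S := ∑ y ∈ T.neighborFinset x, C' y with hS
  have hsum_gg : ∑ y ∈ T.neighborFinset x, ggZ (C' y) = 2 * S := by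
    rw [hS, Finset.mul_sum]
    exact Finset.sum_congr rfl hggneg
  set a := C' x with ha
  have hF1 : a + 2 * S ≤ -1 := by
    by_contra hF1
    push_neg at hF1
    have hfeas : Feas T (insert x (T.neighborFinset x)) C' := by
      rw [feas_star hT x C', hsum_gg]
      omega
    exact hns (hToSolv D (hFiff.mpr hfeas))
  have hxstar : x ∈ insert x (T.neighborFinset x) := Finset.mem_insert_self _ _
  -- add one pebble at x
  have hD1sum : ∑ v, (fun v => if v = x then D v + 1 else D v) v = ∑ v, D v + 1 := by
    have hptw : ∀ v : V, (if v = x then D v + 1 else D v) = D v + (if v = x then 1 else 0) := by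
      intro v; by_cases h : v = x <;> simp [h]
    rw [Finset.sum_congr rfl (fun v _ => hptw v), Finset.sum_add_distrib,
      Finset.sum_ite_eq' Finset.univ x (fun _ => 1)]
    simp
  have hD1solv : Solvable T ω (fun v => if v = x then D v + 1 else D v) :=
    cover_solv hT ω _ (by rw [hD1sum]; omega)
  have hcb1 : Contract T Finset.univ
      (fun w => ((D w : ℤ) - (ω w : ℤ)) + (if w = x then 1 else 0))
      (insert x (T.neighborFinset x)) (fun v => C' v + (if v = x then 1 else 0)) :=
    contract_bump hcontract _ (fun v hv => if_neg (fun h : v = x => hv (by rw [h]; exact hxstar)))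
  have hfun1 : (fun w => ((D w : ℤ) - (ω w : ℤ)) + (if w = x then 1 else 0)) =
      (fun w => (((fun v => if v = x then D v + 1 else D v) w : ℕ) : ℤ) - (ω w : ℤ)) := by
    funext w
    by_cases h : w = x <;> simp [h] <;> push_cast <;> ring
  rw [hfun1] at hcb1
  have hfeas1 : Feas T (insert x (T.neighborFinset x)) (fun v => C' v + (if v = x then 1 else 0)) :=
    (contract_feas hcb1).mp (solvable_feas hD1solv)
  have hF2 : 0 ≤ (a + 1) + 2 * S := by
    have hfin := (feas_star hT x _).mp hfeas1
    have hterm : ∀ y ∈ T.neighborFinset x,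
        ggZ (C' y + (if y = x then (1:ℤ) else 0)) = 2 * C' y := by
      intro y hy
      have hyadj : T.Adj x y := by rwa [SimpleGraph.mem_neighborFinset] at hy
      have hyne : y ≠ x := fun h => T.loopless.irrefl x (h ▸ hyadj)
      rw [if_neg hyne, add_zero]
      exact hggneg y hy
    rw [Finset.sum_congr rfl hterm, ← Finset.mul_sum, ← hS] at hfin
    simp only [eq_self_iff_true, if_true] at hfin
    linarith
  have heq : a + 2 * S = -1 := by omega
  -- pick the branch with maximal induced value
  have hNne : (T.neighborFinset x).Nonempty := by
    rw [← Finset.card_pos, SimpleGraph.card_neighborFinset_eq_degree]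
    omega
  obtain ⟨j, hjN, hjmax⟩ := Finset.exists_max_image (T.neighborFinset x) (fun y => C' y) hNne
  have hjadj : T.Adj x j := by rwa [SimpleGraph.mem_neighborFinset] at hjN
  have hjx : j ≠ x := fun h => T.loopless.irrefl x (h ▸ hjadj)
  set cj := C' j with hcj
  have hcjneg : cj ≤ -1 := hneg j hjN
  have hdeg2 : 2 ≤ ((T.neighborFinset x).card : ℤ) := by
    rw [SimpleGraph.card_neighborFinset_eq_degree]
    exact_mod_cast hdeg
  have hSle : S ≤ ((T.neighborFinset x).card : ℤ) * cj := by
    rw [hS]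
    have h1 := Finset.sum_le_card_nsmul (T.neighborFinset x) (fun y => C' y) cj
      (fun y hy => hjmax y hy)
    simpa [nsmul_eq_mul] using h1
  have hS2 : S ≤ 2 * cj := by
    have hprod : (((T.neighborFinset x).card : ℤ) - 2) * cj ≤ 0 :=
      mul_nonpos_of_nonneg_of_nonpos (by linarith) (by linarith)
    have hexp : (((T.neighborFinset x).card : ℤ)) * cj
        = (((T.neighborFinset x).card : ℤ) - 2) * cj + 2 * cj := by ring
    linarith
  have hax : 3 ≤ a := by linarith
  have hCx : C' x = (D x : ℤ) - ω x := contract_fixed hcontract x hxstar (fun w hw =>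
    Finset.mem_insert_of_mem (by rw [SimpleGraph.mem_neighborFinset]; exact hw))
  have haD : a ≤ (D x : ℤ) := by
    rw [ha, hCx]
    have : (0:ℤ) ≤ ω x := by positivity
    linarith
  set m : ℤ := 2 * a + 3 * cj + 1 with hm
  have hm1 : a + 1 ≤ m := by linarith
  have hm0 : 0 ≤ m := by linarith
  have hatoNat : (a.toNat : ℤ) = a := Int.toNat_of_nonneg (by linarith)
  have hmtoNat : (m.toNat : ℤ) = m := Int.toNat_of_nonneg hm0
  have haleD : a.toNat ≤ D x := by omega
  -- the modified distribution E
  set E : V → ℕ := fun v => if v = x then D x - a.toNat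
    else if v = j then D v + m.toNat else D v with hE
  have hEv : ∀ v, (E v : ℤ) = (D v : ℤ) + (if v = x then -a else if v = j then m else 0) := by
    intro v
    rw [hE]
    by_cases h : v = x
    · subst h
      simp only [eq_self_iff_true, if_true]
      omega
    · by_cases h2 : v = j
      · subst h2
        simp only [if_neg h, eq_self_iff_true, if_true]
        push_cast
        omega
      · simp only [if_neg h, if_neg h2, add_zero]
  have hEω : (fun v => (E v : ℤ) - (ω v : ℤ)) =
      (fun v => ((D v : ℤ) - (ω v : ℤ)) + (if v = x then -a else if v = j then m else 0)) := by
    funext v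
    rw [hEv v]
    ring
  have hjstar : j ∈ insert x (T.neighborFinset x) := Finset.mem_insert_of_mem hjN
  have hcbE : Contract T Finset.univ (fun v => (E v : ℤ) - (ω v : ℤ))
      (insert x (T.neighborFinset x))
      (fun v => C' v + (if v = x then -a else if v = j then m else 0)) := by
    rw [hEω]
    exact contract_bump hcontract _ (fun v hv => by
      rw [if_neg (fun h : v = x => hv (by rw [h]; exact hxstar)),
        if_neg (fun h : v = j => hv (by rw [h]; exact hjstar))])
  have hEsumZ : ∑ v, (E v : ℤ) = ∑ v, (D v : ℤ) + (m - a) := by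
    rw [Finset.sum_congr rfl (fun v _ => hEv v), Finset.sum_add_distrib]
    congr 1
    have hptw : ∀ v : V, (if v = x then -a else if v = j then m else 0)
        = (if v = x then -a else 0) + (if v = j then m else 0) := by
      intro v
      by_cases h : v = x
      · rw [if_pos h, if_neg (fun hh : v = j => hjx (hh.symm.trans h)), add_zero, if_pos h]
      · by_cases h2 : v = j
        · rw [if_neg h, if_pos h2, if_neg h, zero_add]
        · rw [if_neg h, if_neg h2, add_zero, if_neg h]
    rw [Finset.sum_congr rfl (fun v _ => hptw v), Finset.sum_add_distrib,
      Finset.sum_ite_eq' Finset.univ x (fun _ => -a),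
      Finset.sum_ite_eq' Finset.univ j (fun _ => m)]
    simp only [Finset.mem_univ, if_true]
    ring
  have hEsolv : Solvable T ω E := by
    apply cover_solv hT ω E
    have hcast : ((∑ v, E v : ℕ) : ℤ) = ∑ v, (E v : ℤ) := by push_cast; rfl
    have hDcast : ((∑ v, D v : ℕ) : ℤ) = ∑ v, (D v : ℤ) := by push_cast; rfl
    have hsz : ((∑ v, D v : ℕ) : ℤ) = (coverNum T ω : ℤ) - 1 := by
      have h1 : ∑ v, D v = coverNum T ω - 1 := hsize
      omega
    have : (coverNum T ω : ℤ) ≤ ((∑ v, E v : ℕ) : ℤ) := by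
      rw [hcast, hEsumZ, ← hDcast, hsz]
      linarith
    exact_mod_cast this
  have hfeasE := (contract_feas hcbE).mp (solvable_feas hEsolv)
  have hfinE := (feas_star hT x _).mp hfeasE
  have hsplit : ∑ y ∈ T.neighborFinset x,
      ggZ (C' y + (if y = x then -a else if y = j then m else 0))
      = ∑ y ∈ (T.neighborFinset x).erase j, (2 * C' y) + ggZ (cj + m) := by
    rw [← Finset.sum_erase_add _ _ hjN]
    congr 1
    · apply Finset.sum_congr rfl
      intro y hy
      have hyj : y ≠ j := Finset.ne_of_mem_erase hy
      have hyN := Finset.mem_of_mem_erase hy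
      have hyadj : T.Adj x y := by rwa [SimpleGraph.mem_neighborFinset] at hyN
      have hyx : y ≠ x := fun h => T.loopless.irrefl x (h ▸ hyadj)
      rw [if_neg hyx, if_neg hyj, add_zero]
      exact hggneg y hyN
    · rw [if_neg hjx]
      simp only [eq_self_iff_true, if_true]
      rfl
  have hSerase : ∑ y ∈ (T.neighborFinset x).erase j, C' y = S - cj := by
    have h1 := Finset.sum_erase_add (T.neighborFinset x) (fun y => C' y) hjN
    rw [hS, hcj]
    linarith [h1]
  have h2S : ∑ y ∈ (T.neighborFinset x).erase j, (2 * C' y) = 2 * (S - cj) := by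
    rw [← Finset.mul_sum, hSerase]
  have hggj : ggZ (cj + m) = a + 2 * cj := by
    unfold ggZ
    rw [if_pos (by linarith)]
    have hval : cj + m = 2 * (a + 2 * cj) + 1 := by rw [hm]; ring
    omega
  rw [hsplit, h2S, hggj] at hfinE
  simp only [eq_self_iff_true, if_true] at hfinE
  linarith
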